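/- Let n ≥ 2, d ∈ ℕ, a ∈ ℤ/nℤ, and 𝐤 ∈ ℕ₀^d. Then the monomial a·𝐱^𝐤 is reducible modulo n (i.e., there exists p ∈ (ℤ/nℤ)[x₁,...,x_d] of total degree < |𝐤| with a·𝐱^𝐤 = p(𝐱) for all 𝐱 ∈ (ℤ/nℤ)^d) if and only if n divides a·𝐤!, where 𝐤! = k₁!·k₂!···k_d!. -/
import Mathlib

open Finset MvPolynomial

private def Tsum (r j : ℕ) : ℤ :=
  ∑ i ∈ Finset.range (r + 1), (-1) ^ (r - i) * (r.choose i) * (i : ℤ) ^ j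

private lemma Tsum_succ (r j : ℕ) :
    Tsum (r + 1) j = (∑ t ∈ Finset.range (j + 1), (j.choose t : ℤ) * Tsum r t) - Tsum r j := by
  have h1 : Tsum (r + 1) j
      = ∑ i ∈ Finset.range (r + 1), (-1 : ℤ) ^ (r - i) * ((r + 1).choose (i + 1)) * ((i : ℤ) + 1) ^ j
        + (-1) ^ (r + 1) * ((r + 1).choose 0) * (0 : ℤ) ^ j := by
    rw [Tsum, Finset.sum_range_succ']
    congr 1
    apply Finset.sum_congr rfl
    intro i hi
    rw [Finset.mem_range] at hi
    rw [show r + 1 - (i + 1) = r - i from by omega]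
    push_cast; ring
  have h2 : ∀ i : ℕ, ((r + 1).choose (i + 1) : ℤ) = r.choose i + r.choose (i + 1) := by
    intro i; rw [Nat.choose_succ_succ]; push_cast; ring
  -- split the sum
  have h3 : Tsum (r + 1) j
      = ∑ i ∈ Finset.range (r + 1), (-1 : ℤ) ^ (r - i) * (r.choose i) * ((i : ℤ) + 1) ^ j
        + (∑ i ∈ Finset.range (r + 1), (-1 : ℤ) ^ (r - i) * (r.choose (i + 1)) * ((i : ℤ) + 1) ^ j
          + (-1) ^ (r + 1) * ((r + 1).choose 0) * (0 : ℤ) ^ j) := by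
    rw [h1, ← add_assoc, ← Finset.sum_add_distrib]
    congr 1
    apply Finset.sum_congr rfl; intro i _; rw [h2]; ring
  -- second part is -Tsum r j
  have h4 : (∑ i ∈ Finset.range (r + 1), (-1 : ℤ) ^ (r - i) * (r.choose (i + 1)) * ((i : ℤ) + 1) ^ j
          + (-1) ^ (r + 1) * ((r + 1).choose 0) * (0 : ℤ) ^ j) = -Tsum r j := by
    rw [Finset.sum_range_succ, Nat.choose_succ_self]
    have e0 : Tsum r j = ∑ i ∈ Finset.range r, (-1 : ℤ) ^ (r - (i + 1)) * (r.choose (i + 1)) * ((i : ℤ) + 1) ^ j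
        + (-1) ^ (r - 0) * (r.choose 0) * (0 : ℤ) ^ j := by
      rw [Tsum, Finset.sum_range_succ']
      push_cast; ring_nf
    rw [e0]
    have hsum : ∑ x ∈ Finset.range r, (-1 : ℤ) ^ (r - x) * (r.choose (x + 1)) * ((x : ℤ) + 1) ^ j
        = -∑ x ∈ Finset.range r, (-1 : ℤ) ^ (r - (x + 1)) * (r.choose (x + 1)) * ((x : ℤ) + 1) ^ j := by
      rw [← Finset.sum_neg_distrib]
      apply Finset.sum_congr rfl
      intro i hi
      rw [Finset.mem_range] at hi
      rw [show r - i = (r - (i + 1)) + 1 from by omega, pow_succ]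
      ring
    rw [hsum]
    rw [show (-1 : ℤ) ^ (r + 1) = -(-1) ^ (r - 0) from by rw [Nat.sub_zero, pow_succ]; ring]
    simp only [Nat.choose_zero_right, Nat.cast_one, Nat.cast_zero]
    ring
  -- first part
  have h5 : ∑ i ∈ Finset.range (r + 1), (-1 : ℤ) ^ (r - i) * (r.choose i) * ((i : ℤ) + 1) ^ j
      = ∑ t ∈ Finset.range (j + 1), (j.choose t : ℤ) * Tsum r t := by
    have expand : ∀ i : ℕ, ((i : ℤ) + 1) ^ j = ∑ t ∈ Finset.range (j + 1), (i : ℤ) ^ t * (j.choose t) := by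
      intro i
      rw [add_pow]
      apply Finset.sum_congr rfl; intro t _; ring
    calc ∑ i ∈ Finset.range (r + 1), (-1 : ℤ) ^ (r - i) * (r.choose i) * ((i : ℤ) + 1) ^ j
        = ∑ i ∈ Finset.range (r + 1), ∑ t ∈ Finset.range (j + 1),
            (j.choose t : ℤ) * ((-1 : ℤ) ^ (r - i) * (r.choose i) * (i : ℤ) ^ t) := by
          apply Finset.sum_congr rfl; intro i _
          rw [expand, Finset.mul_sum]
          apply Finset.sum_congr rfl; intro t _; ring
      _ = ∑ t ∈ Finset.range (j + 1), (j.choose t : ℤ) * Tsum r t := by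
          rw [Finset.sum_comm]
          apply Finset.sum_congr rfl; intro t _
          rw [Tsum, Finset.mul_sum]
  rw [h3, h4, h5]; ring

private lemma Tsum_eq_zero : ∀ r : ℕ, ∀ j : ℕ, j < r → Tsum r j = 0 := by
  intro r
  induction r with
  | zero => intro j hj; omega
  | succ r ih =>
    intro j hj
    rw [Tsum_succ, Finset.sum_range_succ, Nat.choose_self]
    have : ∑ t ∈ Finset.range j, (j.choose t : ℤ) * Tsum r t = 0 := by
      apply Finset.sum_eq_zero
      intro t ht
      rw [Finset.mem_range] at ht
      rw [ih t (by omega)]; ring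
    rw [this]; push_cast; ring

private lemma Tsum_self : ∀ r : ℕ, Tsum r r = (r.factorial : ℤ) := by
  intro r
  induction r with
  | zero => simp [Tsum]
  | succ r ih =>
    rw [Tsum_succ, Finset.sum_range_succ, Finset.sum_range_succ, Nat.choose_self,
      Nat.choose_succ_self_right]
    have : ∑ t ∈ Finset.range r, ((r + 1).choose t : ℤ) * Tsum r t = 0 := by
      apply Finset.sum_eq_zero
      intro t ht
      rw [Finset.mem_range] at ht
      rw [Tsum_eq_zero r t ht]; ring
    rw [this, ih, Nat.factorial_succ]
    push_cast; ring

private lemma prod_range_eq_ascFactorial (m k : ℕ) :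
    ∏ l ∈ Finset.range k, (m + 1 + l) = (m + 1).ascFactorial k := by
  induction k with
  | zero => simp
  | succ k ih => rw [Finset.prod_range_succ, ih, Nat.ascFactorial_succ]; ring

private lemma exists_factorial_mul (n k : ℕ) [NeZero n] (c : ZMod n) :
    ∃ t : ZMod n, (∏ l ∈ Finset.range k, (c + l + 1)) = (k.factorial : ZMod n) * t := by
  obtain ⟨m, rfl⟩ : ∃ m : ℕ, (m : ZMod n) = c := ⟨c.val, ZMod.natCast_rightInverse c⟩
  obtain ⟨u, hu⟩ := Nat.factorial_dvd_ascFactorial (m + 1) k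
  refine ⟨(u : ZMod n), ?_⟩
  have : (∏ l ∈ Finset.range k, ((m : ZMod n) + l + 1)) = ((∏ l ∈ Finset.range k, (m + 1 + l) : ℕ) : ZMod n) := by
    push_cast; apply Finset.prod_congr rfl; intro l _; ring
  rw [this, prod_range_eq_ascFactorial, hu]
  push_cast; ring

section decomp
variable {n : ℕ} [Fact (1 < n)] {d : ℕ}

private lemma X_prod_decomp (i : Fin d) (K : ℕ) :
    ∃ h : MvPolynomial (Fin d) (ZMod n),
      (∏ l ∈ Finset.range K, (X i + C ((l : ZMod n) + 1))) = X i ^ K + h ∧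
        (h = 0 ∨ h.totalDegree < K) := by
  induction K with
  | zero => exact ⟨0, by simp, Or.inl rfl⟩
  | succ K ih =>
    obtain ⟨h, hEq, hd⟩ := ih
    refine ⟨h * X i + (C ((K : ZMod n) + 1) * X i ^ K + C ((K : ZMod n) + 1) * h), ?_, ?_⟩
    · rw [Finset.prod_range_succ, hEq]; ring
    rcases hd with rfl | hdeg
    · right
      simp only [zero_mul, mul_zero, zero_add, add_zero]
      calc (C ((K : ZMod n) + 1) * X i ^ K : MvPolynomial (Fin d) (ZMod n)).totalDegree
          ≤ (C ((K : ZMod n) + 1) : MvPolynomial (Fin d) (ZMod n)).totalDegree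
            + (X i ^ K : MvPolynomial (Fin d) (ZMod n)).totalDegree := totalDegree_mul _ _
        _ ≤ 0 + K := by rw [totalDegree_C, totalDegree_X_pow]
        _ < K + 1 := by omega
    · right
      have b1 : (h * X i).totalDegree < K + 1 := by
        calc (h * X i).totalDegree ≤ h.totalDegree + (X i : MvPolynomial (Fin d) (ZMod n)).totalDegree :=
              totalDegree_mul _ _
          _ ≤ h.totalDegree + 1 := by rw [totalDegree_X]
          _ < K + 1 := by omega
      have b2 : (C ((K : ZMod n) + 1) * X i ^ K : MvPolynomial (Fin d) (ZMod n)).totalDegree < K + 1 := by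
        calc (C ((K : ZMod n) + 1) * X i ^ K : MvPolynomial (Fin d) (ZMod n)).totalDegree
            ≤ (C ((K : ZMod n) + 1) : MvPolynomial (Fin d) (ZMod n)).totalDegree
              + (X i ^ K : MvPolynomial (Fin d) (ZMod n)).totalDegree := totalDegree_mul _ _
          _ ≤ 0 + K := by rw [totalDegree_C, totalDegree_X_pow]
          _ < K + 1 := by omega
      have b3 : (C ((K : ZMod n) + 1) * h : MvPolynomial (Fin d) (ZMod n)).totalDegree < K + 1 := by
        calc (C ((K : ZMod n) + 1) * h).totalDegree
            ≤ (C ((K : ZMod n) + 1) : MvPolynomial (Fin d) (ZMod n)).totalDegree + h.totalDegree :=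
              totalDegree_mul _ _
          _ ≤ 0 + h.totalDegree := by rw [totalDegree_C]
          _ < K + 1 := by omega
      calc (h * X i + (C ((K : ZMod n) + 1) * X i ^ K + C ((K : ZMod n) + 1) * h)).totalDegree
          ≤ max (h * X i).totalDegree
            ((C ((K : ZMod n) + 1) * X i ^ K + C ((K : ZMod n) + 1) * h)).totalDegree :=
            totalDegree_add _ _
        _ ≤ max (h * X i).totalDegree
            (max (C ((K : ZMod n) + 1) * X i ^ K : MvPolynomial (Fin d) (ZMod n)).totalDegree
              (C ((K : ZMod n) + 1) * h : MvPolynomial (Fin d) (ZMod n)).totalDegree) :=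
            max_le_max le_rfl (totalDegree_add _ _)
        _ < K + 1 := by omega

private lemma bigProd_decomp (k : Fin d → ℕ) (s : Finset (Fin d)) :
    ∃ h : MvPolynomial (Fin d) (ZMod n),
      (∏ i ∈ s, ∏ l ∈ Finset.range (k i), (X i + C ((l : ZMod n) + 1)))
        = ∏ i ∈ s, X i ^ k i + h ∧ (h = 0 ∨ h.totalDegree < ∑ i ∈ s, k i) := by
  classical
  induction s using Finset.induction with
  | empty => exact ⟨0, by simp, Or.inl rfl⟩
  | @insert i s his ih =>
    obtain ⟨h, hEq, hd⟩ := ih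
    obtain ⟨g, gEq, gd⟩ := X_prod_decomp (n := n) i (k i)
    refine ⟨g * ∏ j ∈ s, X j ^ k j + (X i ^ k i + g) * h, ?_, ?_⟩
    · rw [Finset.prod_insert his, Finset.prod_insert his, hEq, gEq]; ring
    have hA : (X i ^ k i + g : MvPolynomial (Fin d) (ZMod n)).totalDegree ≤ k i := by
      rcases gd with rfl | gdeg
      · simp only [add_zero]; exact le_of_eq (totalDegree_X_pow (R := ZMod n) i (k i))
      · calc (X i ^ k i + g : MvPolynomial (Fin d) (ZMod n)).totalDegree
            ≤ max (X i ^ k i : MvPolynomial (Fin d) (ZMod n)).totalDegree g.totalDegree :=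
            totalDegree_add _ _
          _ ≤ k i := by rw [totalDegree_X_pow]; omega
    have hP : (∏ j ∈ s, X j ^ k j : MvPolynomial (Fin d) (ZMod n)).totalDegree ≤ ∑ j ∈ s, k j := by
      refine (totalDegree_finset_prod _ _).trans ?_
      exact Finset.sum_le_sum fun j _ => le_of_eq (totalDegree_X_pow _ _)
    rcases gd with rfl | gdeg
    · rcases hd with rfl | hdeg
      · left; simp
      · right
        rw [Finset.sum_insert his]
        simp only [zero_mul, zero_add, add_zero]
        calc (X i ^ k i * h : MvPolynomial (Fin d) (ZMod n)).totalDegree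
            ≤ (X i ^ k i : MvPolynomial (Fin d) (ZMod n)).totalDegree + h.totalDegree :=
              totalDegree_mul _ _
          _ ≤ k i + h.totalDegree := by rw [totalDegree_X_pow]
          _ < k i + ∑ j ∈ s, k j := by omega
    · right
      rw [Finset.sum_insert his]
      have b1 : (g * ∏ j ∈ s, X j ^ k j : MvPolynomial (Fin d) (ZMod n)).totalDegree
          < k i + ∑ j ∈ s, k j := by
        calc (g * ∏ j ∈ s, X j ^ k j : MvPolynomial (Fin d) (ZMod n)).totalDegree
            ≤ g.totalDegree + (∏ j ∈ s, X j ^ k j : MvPolynomial (Fin d) (ZMod n)).totalDegree :=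
              totalDegree_mul _ _
          _ < k i + ∑ j ∈ s, k j := by omega
      have b2 : ((X i ^ k i + g) * h : MvPolynomial (Fin d) (ZMod n)).totalDegree
          < k i + ∑ j ∈ s, k j ∨ (X i ^ k i + g) * h = 0 := by
        rcases hd with rfl | hdeg
        · right; rw [mul_zero]
        · left
          calc ((X i ^ k i + g) * h : MvPolynomial (Fin d) (ZMod n)).totalDegree
              ≤ (X i ^ k i + g : MvPolynomial (Fin d) (ZMod n)).totalDegree + h.totalDegree :=
                totalDegree_mul _ _
            _ < k i + ∑ j ∈ s, k j := by omega
      rcases b2 with b2 | b2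
      · calc (g * ∏ j ∈ s, X j ^ k j + (X i ^ k i + g) * h).totalDegree
            ≤ max (g * ∏ j ∈ s, X j ^ k j : MvPolynomial (Fin d) (ZMod n)).totalDegree
              ((X i ^ k i + g) * h : MvPolynomial (Fin d) (ZMod n)).totalDegree :=
              totalDegree_add _ _
          _ < k i + ∑ j ∈ s, k j := by omega
      · rw [b2, add_zero]; exact b1

end decomp


/-- A monomial `a ⬝ 𝐱^𝐤` over `ℤ/nℤ` is reducible (representable by a
polynomial of total degree `< |𝐤|`, with the convention `deg 0 = -∞`) if and
only if `n ∣ a ⬝ 𝐤!`. -/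
theorem monomial_reducible_iff (n : ℕ) (hn : 2 ≤ n) (d : ℕ) (a : ZMod n)
    (k : Fin d → ℕ) :
    (∃ p : MvPolynomial (Fin d) (ZMod n),
        (p = 0 ∨ p.totalDegree < ∑ i, k i) ∧
        ∀ x : Fin d → ZMod n, MvPolynomial.eval x p = a * ∏ i, x i ^ k i)
      ↔ (∏ i, Nat.factorial (k i) : ZMod n) * a = 0 := by
  haveI : Fact (1 < n) := ⟨by omega⟩
  haveI : NeZero n := ⟨by omega⟩
  classical
  constructor
  · rintro ⟨p, hdeg, hp⟩
    -- the key per-monomial sum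
    have key : ∀ m : Fin d → ℕ,
        (∑ j ∈ Fintype.piFinset (fun i : Fin d => Finset.range (k i + 1)),
          ∏ i, ((-1 : ZMod n) ^ (k i - j i) * ((k i).choose (j i) : ZMod n)
              * ((j i : ZMod n)) ^ (m i)))
        = ∏ i, ((Tsum (k i) (m i) : ℤ) : ZMod n) := by
      intro m
      have hps := Finset.prod_univ_sum (fun i : Fin d => Finset.range (k i + 1))
        (fun i x => ((-1 : ZMod n) ^ (k i - x) * ((k i).choose x : ZMod n) * (x : ZMod n) ^ (m i)))
      rw [← hps]
      apply Finset.prod_congr rfl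
      intro i _
      rw [Tsum]
      push_cast
      rfl
    set S : ZMod n :=
      ∑ j ∈ Fintype.piFinset (fun i : Fin d => Finset.range (k i + 1)),
        (∏ i, ((-1 : ZMod n) ^ (k i - j i) * ((k i).choose (j i) : ZMod n)))
          * MvPolynomial.eval (fun i => (j i : ZMod n)) p with hS
    -- first evaluation : S = a * 𝐤!
    have way1 : S = a * ∏ i, ((k i).factorial : ZMod n) := by
      rw [hS]
      have : ∀ j : Fin d → ℕ,
          (∏ i, ((-1 : ZMod n) ^ (k i - j i) * ((k i).choose (j i) : ZMod n)))
            * MvPolynomial.eval (fun i => (j i : ZMod n)) p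
          = a * ∏ i, ((-1 : ZMod n) ^ (k i - j i) * ((k i).choose (j i) : ZMod n)
              * ((j i : ZMod n)) ^ (k i)) := by
        intro j
        rw [hp]
        simp only [Finset.prod_mul_distrib]
        ring
      rw [Finset.sum_congr rfl fun j _ => this j, ← Finset.mul_sum, key k]
      congr 1
      apply Finset.prod_congr rfl
      intro i _
      rw [Tsum_self]
      push_cast
      rfl
    -- second evaluation : S = 0
    have way2 : S = 0 := by
      rw [hS]
      have expand : ∀ j : Fin d → ℕ,
          (∏ i, ((-1 : ZMod n) ^ (k i - j i) * ((k i).choose (j i) : ZMod n)))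
            * MvPolynomial.eval (fun i => (j i : ZMod n)) p
          = ∑ m ∈ p.support, MvPolynomial.coeff m p *
              ∏ i, ((-1 : ZMod n) ^ (k i - j i) * ((k i).choose (j i) : ZMod n)
                * ((j i : ZMod n)) ^ (m i)) := by
        intro j
        rw [MvPolynomial.eval_eq', Finset.mul_sum]
        apply Finset.sum_congr rfl
        intro m _
        simp only [Finset.prod_mul_distrib]
        ring
      rw [Finset.sum_congr rfl fun j _ => expand j, Finset.sum_comm]
      apply Finset.sum_eq_zero
      intro m hm
      rw [← Finset.mul_sum, key (fun i => m i)]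
      -- m has total degree < ∑ k, so some m i < k i
      have hlt : ∑ i, m i < ∑ i, k i := by
        have h1 : (m.sum fun _ e => e) ≤ p.totalDegree := MvPolynomial.le_totalDegree hm
        have h2 : (m.sum fun _ e => e) = ∑ i, m i := by
          rw [Finsupp.sum_fintype]
          intro i; rfl
        rw [h2] at h1
        rcases hdeg with rfl | hdeg
        · simp at hm
        · omega
      obtain ⟨i, hi⟩ : ∃ i, m i < k i := by
        by_contra hc
        push_neg at hc
        have hge : ∑ i, k i ≤ ∑ i, m i := Finset.sum_le_sum fun i _ => hc i
        omega
      rw [Finset.prod_eq_zero (Finset.mem_univ i)]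
      · ring
      · rw [Tsum_eq_zero (k i) (m i) hi]
        simp
    rw [way2] at way1
    have : (∏ i, ((k i).factorial : ZMod n)) * a = 0 := by rw [mul_comm, ← way1]
    exact this
  · intro h0
    -- construct the null polynomial
    obtain ⟨h, hEq, hd⟩ := bigProd_decomp (n := n) k Finset.univ
    refine ⟨MvPolynomial.C a * ∏ i, MvPolynomial.X i ^ k i
        - MvPolynomial.C a * ∏ i, ∏ l ∈ Finset.range (k i),
            (MvPolynomial.X i + MvPolynomial.C ((l : ZMod n) + 1)), ?_, ?_⟩
    · rw [hEq]
      have : MvPolynomial.C a * ∏ i, MvPolynomial.X i ^ k i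
          - MvPolynomial.C a * ((∏ i, MvPolynomial.X i ^ k i) + h)
          = MvPolynomial.C (-a) * h := by
        rw [map_neg]; ring
      rw [this]
      rcases hd with rfl | hdeg
      · left; rw [mul_zero]
      · right
        calc (MvPolynomial.C (-a) * h).totalDegree
            ≤ (MvPolynomial.C (-a) : MvPolynomial (Fin d) (ZMod n)).totalDegree
              + h.totalDegree := MvPolynomial.totalDegree_mul _ _
          _ ≤ 0 + h.totalDegree := by rw [MvPolynomial.totalDegree_C]
          _ < ∑ i, k i := by omega
    · intro x
      have heval : ∀ i : Fin d,
          MvPolynomial.eval x (∏ l ∈ Finset.range (k i),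
            (MvPolynomial.X i + MvPolynomial.C ((l : ZMod n) + 1)))
          = ∏ l ∈ Finset.range (k i), (x i + (l : ZMod n) + 1) := by
        intro i
        rw [map_prod]
        apply Finset.prod_congr rfl
        intro l _
        simp [add_assoc]
      have hzero : a * ∏ i, MvPolynomial.eval x (∏ l ∈ Finset.range (k i),
          (MvPolynomial.X i + MvPolynomial.C ((l : ZMod n) + 1))) = 0 := by
        have ht : ∀ i : Fin d, ∃ t : ZMod n,
            MvPolynomial.eval x (∏ l ∈ Finset.range (k i),
              (MvPolynomial.X i + MvPolynomial.C ((l : ZMod n) + 1)))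
            = ((k i).factorial : ZMod n) * t := by
          intro i
          rw [heval i]
          exact exists_factorial_mul n (k i) (x i)
        choose t htt using ht
        calc a * ∏ i, MvPolynomial.eval x (∏ l ∈ Finset.range (k i),
              (MvPolynomial.X i + MvPolynomial.C ((l : ZMod n) + 1)))
            = a * ∏ i, (((k i).factorial : ZMod n) * t i) := by
              rw [Finset.prod_congr rfl fun i _ => htt i]
          _ = ((∏ i, ((k i).factorial : ZMod n)) * a) * ∏ i, t i := by
              rw [Finset.prod_mul_distrib]; ring
          _ = 0 := by rw [h0, zero_mul]
      have e1 : MvPolynomial.eval x (MvPolynomial.C a * ∏ i, MvPolynomial.X i ^ k i)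
          = a * ∏ i, x i ^ k i := by
        simp
      have e2 : MvPolynomial.eval x (MvPolynomial.C a * ∏ i, ∏ l ∈ Finset.range (k i),
          (MvPolynomial.X i + MvPolynomial.C ((l : ZMod n) + 1))) = 0 := by
        rw [map_mul, MvPolynomial.eval_C, map_prod]
        exact hzero
      rw [map_sub, e1, e2, sub_zero]
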